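/- Let ω ≠ 1 be a complex number, t nonzero, τ an integer, and z_1, ..., z_n pairwise distinct nonzero complex numbers. Fix a subset I ⊂ {1,…,n} of size n_B with 0 ≤ n_B < n. Then the sum over all ordered pairs of disjoint sequences {j_1,…,j_{n_A}}, {k_1,…,k_{n_D}} partitioning {1,…,n}∖I (with n_A + n_D = n − n_B) of (−1)^{n_D} · ∏_{p=1}^{n_A} 1/(t z_{j_p} ω^{τ+n_D+1} − 1) · ∏_{q=1}^{n_D} ω^{q−1}/(t z_{k_q} ω^{τ+n_D} − 1) · ∏_{p=1}^{n_A} ∏_{q=1}^{n_D} (z_{k_q} − z_{j_p} ω)/(z_{k_q} − z_{j_p}) equals 0. -/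

import Mathlib

open Finset Polynomial

variable {K : Type*} [Field K] {ι : Type*} [DecidableEq ι]




/-- Scalar Lagrange identity. -/
lemma lagrange_eval_sum (s : Finset ι) (hs : s.Nonempty) (y : ι → K)
    (hinj : Set.InjOn y s) (x : K) :
    ∑ i ∈ s, ∏ j ∈ s.erase i, ((y i - y j)⁻¹ * (x - y j)) = 1 := by
  have h := congrArg (Polynomial.eval x) (Lagrange.sum_basis hinj hs)
  simpa [Lagrange.basis, Lagrange.basisDivisor, eval_prod, Polynomial.eval_finset_sum] using h

/-- Partial fraction expansion of `∏ (u y_i - 1)⁻¹`. -/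
lemma partial_fractions (s : Finset ι) (hs : s.Nonempty) (u : K) (hu : u ≠ 0)
    (y : ι → K) (hinj : Set.InjOn y s) (hy : ∀ i ∈ s, u * y i ≠ 1) :
    ∏ i ∈ s, (u * y i - 1)⁻¹
      = ∑ i ∈ s, (-u⁻¹) ^ (s.card - 1) * (u * y i - 1)⁻¹
          * ∏ j ∈ s.erase i, (y i - y j)⁻¹ := by
  have h := lagrange_eval_sum s hs y hinj u⁻¹
  calc ∏ i ∈ s, (u * y i - 1)⁻¹
      = (∑ i ∈ s, ∏ j ∈ s.erase i, ((y i - y j)⁻¹ * (u⁻¹ - y j))) * ∏ i ∈ s, (u * y i - 1)⁻¹ := by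
        rw [h, one_mul]
    _ = ∑ i ∈ s, (∏ j ∈ s.erase i, ((y i - y j)⁻¹ * (u⁻¹ - y j))) * ∏ i ∈ s, (u * y i - 1)⁻¹ := by
        rw [Finset.sum_mul]
    _ = _ := by
        refine Finset.sum_congr rfl fun i hi => ?_
        rw [← Finset.mul_prod_erase s _ hi, ← mul_assoc]
        rw [mul_comm (∏ j ∈ s.erase i, ((y i - y j)⁻¹ * (u⁻¹ - y j))) ((u * y i - 1)⁻¹)]
        rw [mul_assoc, ← Finset.prod_mul_distrib]
        have : ∀ j ∈ s.erase i, ((y i - y j)⁻¹ * (u⁻¹ - y j)) * (u * y j - 1)⁻¹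
            = (-u⁻¹) * (y i - y j)⁻¹ := by
          intro j hj
          have hj' := Finset.mem_of_mem_erase hj
          have h1 : u * y j - 1 ≠ 0 := sub_ne_zero.2 (hy j hj')
          have h2 : y i - y j ≠ 0 := sub_ne_zero.2 fun he =>
            (Finset.mem_erase.1 hj).1 (hinj hj' hi he.symm)
          field_simp
          have hX : -1 + y j * u ≠ 0 := by
            rw [show -1 + y j * u = u * y j - 1 by ring]; exact h1
          linear_combination (-1 : K) * (mul_inv_cancel₀ hX)
        rw [Finset.prod_congr rfl this, Finset.prod_mul_distrib, Finset.prod_const,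
          Finset.card_erase_of_mem hi]
        ring


section Abstract
variable {K : Type*} [Field K] {ι : Type*} [DecidableEq ι]

/-- unified pole location -/
def Yf (s : Finset ι) (z : ι → K) (ω : K) (J : Finset ι) (i : ι) : K :=
  z i * ω ^ ((s \ J).card + if i ∈ J then 1 else 0)

/-- constant prefactor of a term -/
def cf (s : Finset ι) (z : ι → K) (ω : K) (J : Finset ι) : K :=
  (-1) ^ (s \ J).card * ω ^ ((s \ J).card * ((s \ J).card - 1) / 2)
    * ∏ j ∈ J, ∏ k ∈ s \ J, (z k - z j * ω) / (z k - z j)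

/-- residue term -/
def Hf (s : Finset ι) (z : ι → K) (ω u : K) (J : Finset ι) (i : ι) : K :=
  cf s z ω J * (u * Yf s z ω J i - 1)⁻¹ * ∏ i' ∈ s.erase i, (Yf s z ω J i - Yf s z ω J i')⁻¹

variable (s : Finset ι) (z : ι → K) (ω u : K)

lemma tri_aux (d : ℕ) : (d+1)*d/2 = d*(d-1)/2 + d := by
  cases d with
  | zero => rfl
  | succ e =>
    have h : (e+1+1)*(e+1) = (e+1)*(e+1-1) + 2*(e+1) := by
      simp only [Nat.add_sub_cancel]; ring
    omega

lemma residue_cancel (hω0 : ω ≠ 0)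
    (hzinj : Set.InjOn z s)
    (hcross : ∀ i ∈ s, ∀ j ∈ s, i ≠ j → z i ≠ ω * z j)
    {J : Finset ι} {i : ι} (hJ : J ⊆ s) (hi : i ∈ J) :
    Hf s z ω u J i + Hf s z ω u (J.erase i) i = 0 := by
  have his : i ∈ s := hJ hi
  set d := (s \ J).card with hd
  have hiK : i ∉ s \ J := fun h => (mem_sdiff.1 h).2 hi
  have hsd : s \ J.erase i = insert i (s \ J) := by
    ext a
    by_cases ha : a = i
    · subst ha; simp [his, hi]
    · simp only [mem_sdiff, mem_erase, mem_insert, ha, false_or]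
      tauto
  have hcard' : (s \ J.erase i).card = d + 1 := by
    rw [hsd, card_insert_of_notMem hiK]
  have hunion : J.erase i ∪ (s \ J) = s.erase i := by
    ext a
    by_cases ha : a = i
    · subst ha; simp [hi]
    · simp only [mem_union, mem_erase, mem_sdiff, ha, true_and]
      tauto
  have hdisj : Disjoint (J.erase i) (s \ J) :=
    Finset.disjoint_sdiff.mono_left (Finset.erase_subset i J)
  -- common building blocks
  set Pc : K := ∏ j ∈ J.erase i, ∏ k ∈ s \ J, (z k - z j * ω) / (z k - z j) with hPc
  set PJ : K := ∏ j ∈ J.erase i, (ω ^ (d+1) * (z i - z j))⁻¹ with hPJ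
  set PK : K := ∏ k ∈ s \ J, (z k - z i)⁻¹ with hPK
  set Dv : K := (u * (z i * ω ^ (d+1)) - 1)⁻¹ with hDv
  -- Claim 1
  have hYi : Yf s z ω J i = z i * ω ^ (d + 1) := by simp [Yf, hi, hd]
  have e1 : Hf s z ω u J i
      = ω ^ (d*(d-1)/2) * (ω ^ (d*d))⁻¹ * (Dv * Pc * PJ * PK) := by
    have ha : ∏ i' ∈ s.erase i, (Yf s z ω J i - Yf s z ω J i')⁻¹
        = PJ * ∏ k ∈ s \ J, (z i * ω ^ (d+1) - z k * ω ^ d)⁻¹ := by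
      rw [← hunion, prod_union hdisj]
      congr 1
      · exact prod_congr rfl fun j hj => by
          have hjJ : j ∈ J := mem_of_mem_erase hj
          rw [hYi, show Yf s z ω J j = z j * ω ^ (d+1) by simp [Yf, hjJ, hd]]
          congr 1; ring
      · exact prod_congr rfl fun k hk => by
          rw [hYi, show Yf s z ω J k = z k * ω ^ d by
            simp [Yf, (mem_sdiff.1 hk).2, hd]]
    have hc : cf s z ω J = (-1)^d * ω^(d*(d-1)/2) *
        ((∏ k ∈ s \ J, (z k - z i * ω) / (z k - z i)) * Pc) := by
      unfold cf
      rw [← Finset.mul_prod_erase J _ hi]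
      try ring
    have key : (∏ k ∈ s \ J, (z k - z i * ω) / (z k - z i))
          * (∏ k ∈ s \ J, (z i * ω ^ (d+1) - z k * ω ^ d)⁻¹)
        = (-1)^d * (ω ^ (d*d))⁻¹ * PK := by
      rw [← prod_mul_distrib]
      have hpt : ∀ k ∈ s \ J, ((z k - z i * ω) / (z k - z i)) * (z i * ω^(d+1) - z k * ω^d)⁻¹
          = (-1) * ((ω^d)⁻¹ * (z k - z i)⁻¹) := by
        intro k hk
        have hks : k ∈ s := (mem_sdiff.1 hk).1
        have hki : k ≠ i := fun h => (mem_sdiff.1 hk).2 (h ▸ hi)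
        have h1 : z k - z i ≠ 0 := sub_ne_zero.2 fun h => hki (hzinj hks his h)
        have h2 : z k - z i * ω ≠ 0 := sub_ne_zero.2 (by
          rw [mul_comm]; exact hcross k hks i his hki)
        have h3 : (ω : K)^d ≠ 0 := pow_ne_zero _ hω0
        have h4 : z i * ω^(d+1) - z k * ω^d = -(ω^d * (z k - z i * ω)) := by ring
        rw [h4]
        field_simp
      rw [prod_congr rfl hpt, prod_mul_distrib, prod_const, prod_mul_distrib, prod_const,
        inv_pow, ← pow_mul, ← hd, ← hPK, mul_assoc]
    have hneg : ((-1 : K))^d * (-1)^d = 1 := by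
      rw [← mul_pow]; norm_num
    calc Hf s z ω u J i
        = cf s z ω J * (u * (z i * ω ^ (d+1)) - 1)⁻¹
            * (PJ * ∏ k ∈ s \ J, (z i * ω ^ (d+1) - z k * ω ^ d)⁻¹) := by
          rw [Hf, ha, hYi]
      _ = ((-1)^d * ω^(d*(d-1)/2)) * ((∏ k ∈ s \ J, (z k - z i * ω) / (z k - z i))
            * (∏ k ∈ s \ J, (z i * ω ^ (d+1) - z k * ω ^ d)⁻¹)) * (Pc * Dv * PJ) := by
          rw [hc, hDv]; ring
      _ = ((-1)^d * ω^(d*(d-1)/2)) * ((-1)^d * (ω ^ (d*d))⁻¹ * PK) * (Pc * Dv * PJ) := by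
          rw [key]
      _ = ((-1)^d * (-1)^d) * (ω^(d*(d-1)/2) * (ω ^ (d*d))⁻¹ * (Dv * Pc * PJ * PK)) := by
          ring
      _ = _ := by rw [hneg]; ring
  -- Claim 2
  have hYi' : Yf s z ω (J.erase i) i = z i * ω ^ (d + 1) := by
    simp [Yf, hcard', Finset.notMem_erase]
  have e2 : Hf s z ω u (J.erase i) i
      = -(ω ^ ((d+1)*d/2) * (ω ^ ((d+1)*d))⁻¹ * (Dv * Pc * PJ * PK)) := by
    have ha' : ∏ i' ∈ s.erase i, (Yf s z ω (J.erase i) i - Yf s z ω (J.erase i) i')⁻¹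
        = (∏ j ∈ J.erase i, (z i * ω ^ (d+1) - z j * ω ^ (d+2))⁻¹)
          * ∏ k ∈ s \ J, (z i * ω ^ (d+1) - z k * ω ^ (d+1))⁻¹ := by
      rw [← hunion, prod_union hdisj]
      congr 1
      · exact prod_congr rfl fun j hj => by
          rw [hYi', show Yf s z ω (J.erase i) j = z j * ω ^ (d+2) by
            simp [Yf, hcard', hj]]
      · exact prod_congr rfl fun k hk => by
          have hkJ' : k ∉ J.erase i := fun h => (mem_sdiff.1 hk).2 (mem_of_mem_erase h)
          rw [hYi', show Yf s z ω (J.erase i) k = z k * ω ^ (d+1) by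
            simp [Yf, hcard', hkJ']]
    have hc' : cf s z ω (J.erase i) = (-1)^(d+1) * ω^((d+1)*d/2) *
        ((∏ j ∈ J.erase i, (z i - z j * ω) / (z i - z j)) * Pc) := by
      unfold cf
      rw [hcard', hsd]
      have hins : ∀ j ∈ J.erase i, ∏ k ∈ insert i (s \ J), (z k - z j * ω) / (z k - z j)
          = ((z i - z j * ω) / (z i - z j)) * ∏ k ∈ s \ J, (z k - z j * ω) / (z k - z j) :=
        fun j _ => Finset.prod_insert hiK
      rw [prod_congr rfl hins, prod_mul_distrib]
      simp only [Nat.add_sub_cancel]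
      try ring
    have key1' : (∏ j ∈ J.erase i, (z i - z j * ω) / (z i - z j))
          * (∏ j ∈ J.erase i, (z i * ω ^ (d+1) - z j * ω ^ (d+2))⁻¹) = PJ := by
      rw [← prod_mul_distrib]
      refine prod_congr rfl fun j hj => ?_
      have hjs : j ∈ s := hJ (mem_of_mem_erase hj)
      have hji : j ≠ i := (mem_erase.1 hj).1
      have h1 : z i - z j ≠ 0 := sub_ne_zero.2 fun h => hji (hzinj his hjs h).symm
      have h2 : z i - z j * ω ≠ 0 := sub_ne_zero.2 (by
        rw [mul_comm]; exact hcross i his j hjs hji.symm)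
      have h3 : (ω : K)^(d+1) ≠ 0 := pow_ne_zero _ hω0
      have h4 : z i * ω^(d+1) - z j * ω^(d+2) = ω^(d+1) * (z i - z j * ω) := by ring
      rw [h4, mul_inv]
      field_simp
    have key2' : ∏ k ∈ s \ J, (z i * ω ^ (d+1) - z k * ω ^ (d+1))⁻¹
        = (-1)^d * (ω ^ ((d+1)*d))⁻¹ * PK := by
      have hpt : ∀ k ∈ s \ J, (z i * ω ^ (d+1) - z k * ω ^ (d+1))⁻¹
          = (-1) * ((ω^(d+1))⁻¹ * (z k - z i)⁻¹) := by
        intro k _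
        rw [show z i * ω^(d+1) - z k * ω^(d+1) = -(ω^(d+1) * (z k - z i)) by ring,
          inv_neg, mul_inv]
        ring
      rw [prod_congr rfl hpt, prod_mul_distrib, prod_const, prod_mul_distrib, prod_const,
        inv_pow, ← pow_mul, mul_assoc]
    have hneg : ((-1 : K))^(d+1) * (-1)^d = -1 := by
      have h0 : ((-1 : K))^d * (-1)^d = 1 := by rw [← mul_pow]; norm_num
      rw [pow_succ]
      linear_combination (-1 : K) * h0
    calc Hf s z ω u (J.erase i) i
        = cf s z ω (J.erase i) * (u * (z i * ω ^ (d+1)) - 1)⁻¹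
            * ((∏ j ∈ J.erase i, (z i * ω ^ (d+1) - z j * ω ^ (d+2))⁻¹)
              * ∏ k ∈ s \ J, (z i * ω ^ (d+1) - z k * ω ^ (d+1))⁻¹) := by
          rw [Hf, ha', hYi']
      _ = ((-1)^(d+1) * ω^((d+1)*d/2))
            * ((∏ j ∈ J.erase i, (z i - z j * ω) / (z i - z j))
              * (∏ j ∈ J.erase i, (z i * ω ^ (d+1) - z j * ω ^ (d+2))⁻¹))
            * (∏ k ∈ s \ J, (z i * ω ^ (d+1) - z k * ω ^ (d+1))⁻¹) * (Pc * Dv) := by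
          rw [hc', hDv]; ring
      _ = ((-1)^(d+1) * ω^((d+1)*d/2)) * PJ * ((-1)^d * (ω ^ ((d+1)*d))⁻¹ * PK) * (Pc * Dv) := by
          rw [key1', key2']
      _ = ((-1)^(d+1) * (-1)^d) * (ω^((d+1)*d/2) * (ω ^ ((d+1)*d))⁻¹ * (Dv * Pc * PJ * PK)) := by
          ring
      _ = _ := by rw [hneg]; ring
  rw [e1, e2]
  have hsc : ω ^ (d*(d-1)/2) * (ω ^ (d*d))⁻¹ = ω ^ ((d+1)*d/2) * (ω ^ ((d+1)*d))⁻¹ := by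
    rw [← div_eq_mul_inv, ← div_eq_mul_inv,
      div_eq_div_iff (pow_ne_zero _ hω0) (pow_ne_zero _ hω0), ← pow_add, ← pow_add]
    congr 1
    have t1 : (d+1)*d/2 = d*(d-1)/2 + d := tri_aux d
    have t2 : (d+1)*d = d*d + d := by ring
    omega
  rw [hsc]
  ring
lemma abstract_sum (hs : s.Nonempty) (hω0 : ω ≠ 0) (hu : u ≠ 0)
    (hzinj : Set.InjOn z s)
    (hcross : ∀ i ∈ s, ∀ j ∈ s, i ≠ j → z i ≠ ω * z j)
    (hden : ∀ i ∈ s, ∀ m : ℕ, m ≤ s.card + 1 → u * z i * ω ^ m ≠ 1) :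
    ∑ J ∈ s.powerset,
      ((-1 : K) ^ ((s \ J).card)
        * ω ^ ((s \ J).card * ((s \ J).card - 1) / 2)
        * (∏ j ∈ J, 1 / (u * z j * ω ^ ((s \ J).card + 1) - 1))
        * (∏ k ∈ s \ J, 1 / (u * z k * ω ^ ((s \ J).card) - 1))
        * ∏ j ∈ J, ∏ k ∈ s \ J, (z k - z j * ω) / (z k - z j)) = 0 := by
  have hYinj : ∀ J ⊆ s, Set.InjOn (Yf s z ω J) s := by
    intro J hJ i hi i' hi' h
    have hw : ∀ e : ℕ, (ω : K) ^ e ≠ 0 := fun e => pow_ne_zero _ hω0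
    by_cases hiJ : i ∈ J <;> by_cases hi'J : i' ∈ J
    · rw [Yf, Yf, if_pos hiJ, if_pos hi'J] at h
      exact hzinj hi hi' (mul_right_cancel₀ (hw _) h)
    · exfalso
      have hne : i' ≠ i := fun he => hi'J (he ▸ hiJ)
      rw [Yf, Yf, if_pos hiJ, if_neg hi'J, add_zero, pow_succ, ← mul_assoc,
        mul_right_comm] at h
      have h2 : z i * ω = z i' := mul_right_cancel₀ (hw _) h
      exact hcross i' hi' i hi hne (by rw [← h2]; ring)
    · exfalso
      have hne : i ≠ i' := fun he => hiJ (he ▸ hi'J)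
      replace h := h.symm
      rw [Yf, Yf, if_pos hi'J, if_neg hiJ, add_zero, pow_succ, ← mul_assoc,
        mul_right_comm] at h
      have h2 : z i' * ω = z i := mul_right_cancel₀ (hw _) h
      exact hcross i hi i' hi' hne (by rw [← h2]; ring)
    · rw [Yf, Yf, if_neg hiJ, if_neg hi'J] at h
      exact hzinj hi hi' (mul_right_cancel₀ (hw _) h)
  have hYden : ∀ J ⊆ s, ∀ i ∈ s, u * Yf s z ω J i ≠ 1 := by
    intro J hJ i hi
    have hb : (s \ J).card + (if i ∈ J then 1 else 0) ≤ s.card + 1 := by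
      have := Finset.card_le_card (Finset.sdiff_subset (s := s) (t := J))
      split <;> omega
    rw [Yf, ← mul_assoc]
    exact hden i hi _ hb
  -- rewrite each term
  have hstep : ∀ J ∈ s.powerset,
      ((-1 : K) ^ ((s \ J).card)
        * ω ^ ((s \ J).card * ((s \ J).card - 1) / 2)
        * (∏ j ∈ J, 1 / (u * z j * ω ^ ((s \ J).card + 1) - 1))
        * (∏ k ∈ s \ J, 1 / (u * z k * ω ^ ((s \ J).card) - 1))
        * ∏ j ∈ J, ∏ k ∈ s \ J, (z k - z j * ω) / (z k - z j))
      = ∑ i ∈ s, (-u⁻¹) ^ (s.card - 1) * Hf s z ω u J i := by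
    intro J hJp
    have hJ : J ⊆ s := Finset.mem_powerset.1 hJp
    have hprod : ∏ i ∈ s, (u * Yf s z ω J i - 1)⁻¹
        = (∏ j ∈ J, 1 / (u * z j * ω ^ ((s \ J).card + 1) - 1))
          * (∏ k ∈ s \ J, 1 / (u * z k * ω ^ ((s \ J).card) - 1)) := by
      have hsplit : ∀ f : ι → K, ∏ i ∈ s, f i = (∏ j ∈ J, f j) * ∏ k ∈ s \ J, f k :=
        fun f => by rw [← prod_union Finset.disjoint_sdiff, Finset.union_sdiff_of_subset hJ]
      rw [hsplit]
      congr 1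
      · exact prod_congr rfl fun j hj => by
          rw [Yf, if_pos hj, one_div, ← mul_assoc]
      · exact prod_congr rfl fun k hk => by
          rw [Yf, if_neg (mem_sdiff.1 hk).2, add_zero, one_div, ← mul_assoc]
    have hpf := partial_fractions s hs u hu (Yf s z ω J) (hYinj J hJ) (hYden J hJ)
    calc ((-1 : K) ^ ((s \ J).card)
        * ω ^ ((s \ J).card * ((s \ J).card - 1) / 2)
        * (∏ j ∈ J, 1 / (u * z j * ω ^ ((s \ J).card + 1) - 1))
        * (∏ k ∈ s \ J, 1 / (u * z k * ω ^ ((s \ J).card) - 1))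
        * ∏ j ∈ J, ∏ k ∈ s \ J, (z k - z j * ω) / (z k - z j))
        = cf s z ω J * ∏ i ∈ s, (u * Yf s z ω J i - 1)⁻¹ := by
          rw [hprod, cf]; ring
      _ = cf s z ω J * ∑ i ∈ s, (-u⁻¹) ^ (s.card - 1) * (u * Yf s z ω J i - 1)⁻¹
            * ∏ j ∈ s.erase i, (Yf s z ω J i - Yf s z ω J j)⁻¹ := by rw [hpf]
      _ = _ := by
          rw [Finset.mul_sum]
          exact sum_congr rfl fun i _ => by rw [Hf]; ring
  rw [Finset.sum_congr rfl hstep]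
  have hfac : ∑ J ∈ s.powerset, ∑ i ∈ s, (-u⁻¹) ^ (s.card - 1) * Hf s z ω u J i
      = (-u⁻¹) ^ (s.card - 1) * ∑ J ∈ s.powerset, ∑ i ∈ s, Hf s z ω u J i := by
    rw [Finset.mul_sum]
    exact sum_congr rfl fun J _ => by rw [Finset.mul_sum]
  rw [hfac]
  have hzero : ∑ J ∈ s.powerset, ∑ i ∈ s, Hf s z ω u J i = 0 := by
    have hsplit : ∀ J ∈ s.powerset, ∑ i ∈ s, Hf s z ω u J i
        = (∑ i ∈ J, Hf s z ω u J i) + ∑ i ∈ s \ J, Hf s z ω u J i := by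
      intro J hJp
      have hJ : J ⊆ s := mem_powerset.1 hJp
      rw [← Finset.sum_union Finset.disjoint_sdiff, Finset.union_sdiff_of_subset hJ]
    rw [Finset.sum_congr rfl hsplit, Finset.sum_add_distrib]
    have hre : ∑ J ∈ s.powerset, ∑ i ∈ s \ J, Hf s z ω u J i
        = ∑ J ∈ s.powerset, ∑ i ∈ J, Hf s z ω u (J.erase i) i := by
      rw [Finset.sum_sigma', Finset.sum_sigma']
      refine Finset.sum_nbij' (fun p => ⟨insert p.2 p.1, p.2⟩) (fun p => ⟨p.1.erase p.2, p.2⟩)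
        ?_ ?_ ?_ ?_ ?_
      · rintro ⟨J, i⟩ hp
        simp only [Finset.mem_sigma, Finset.mem_powerset, Finset.mem_sdiff] at hp ⊢
        exact ⟨Finset.insert_subset hp.2.1 hp.1, Finset.mem_insert_self _ _⟩
      · rintro ⟨J, i⟩ hp
        simp only [Finset.mem_sigma, Finset.mem_powerset, Finset.mem_sdiff] at hp ⊢
        exact ⟨(Finset.erase_subset _ _).trans hp.1, hp.1 hp.2, Finset.notMem_erase _ _⟩
      · rintro ⟨J, i⟩ hp
        simp only [Finset.mem_sigma, Finset.mem_powerset, Finset.mem_sdiff] at hp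
        simp only
        rw [Finset.erase_insert hp.2.2]
      · rintro ⟨J, i⟩ hp
        simp only [Finset.mem_sigma, Finset.mem_powerset] at hp
        simp only
        rw [Finset.insert_erase hp.2]
      · rintro ⟨J, i⟩ hp
        simp only [Finset.mem_sigma, Finset.mem_powerset, Finset.mem_sdiff] at hp
        simp only
        rw [Finset.erase_insert hp.2.2]
    rw [hre, ← Finset.sum_add_distrib]
    refine Finset.sum_eq_zero fun J hJp => ?_
    rw [← Finset.sum_add_distrib]
    exact Finset.sum_eq_zero fun i hi =>
      residue_cancel s z ω u hω0 hzinj hcross (mem_powerset.1 hJp) hi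
  rw [hzero, mul_zero]

end Abstract

section Transfer


variable {K : Type*} [Field K] {ι : Type*} [DecidableEq ι]

lemma combine_term (J Kf : Finset ι) (α : K) (A B : ι → K) (Cn Cd : ι → ι → K) :
    α * (∏ j ∈ J, 1 / A j) * (∏ k ∈ Kf, 1 / B k) * (∏ j ∈ J, ∏ k ∈ Kf, Cn j k / Cd j k)
    = (α * ∏ j ∈ J, ∏ k ∈ Kf, Cn j k)
      / ((∏ j ∈ J, A j) * (∏ k ∈ Kf, B k) * ∏ j ∈ J, ∏ k ∈ Kf, Cd j k) := by
  rw [Finset.prod_congr rfl fun j (_ : j ∈ J) => Finset.prod_div_distrib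
    (f := fun k => Cn j k) (g := fun k => Cd j k), Finset.prod_div_distrib]
  simp only [one_div, div_eq_mul_inv, mul_inv, Finset.prod_mul_distrib,
    Finset.prod_const_one, Finset.prod_inv_distrib]
  ring

lemma sum_div_eq {α : Type*} [DecidableEq α] (F : Finset α) (a b : α → K)
    (hb : ∀ J ∈ F, b J ≠ 0) :
    ∑ J ∈ F, a J / b J
      = (∑ J ∈ F, a J * ∏ J' ∈ F.erase J, b J') / ∏ J ∈ F, b J := by
  classical
  induction F using Finset.induction_on with
  | empty => simp
  | @insert c F' hcF ih =>
    have hbc : b c ≠ 0 := hb c (mem_insert_self _ _)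
    have hb' : ∀ J ∈ F', b J ≠ 0 := fun J hJ => hb J (mem_insert_of_mem hJ)
    have hP : ∏ J ∈ F', b J ≠ 0 := prod_ne_zero_iff.2 hb'
    rw [sum_insert hcF, sum_insert hcF, prod_insert hcF, ih hb', erase_insert hcF]
    have hsum : ∑ J ∈ F', a J * ∏ J' ∈ (insert c F').erase J, b J'
        = ∑ J ∈ F', b c * (a J * ∏ J' ∈ F'.erase J, b J') := by
      refine sum_congr rfl fun J hJ => ?_
      rw [Finset.erase_insert_of_ne ((ne_of_mem_of_not_mem hJ hcF).symm),
        prod_insert (fun h => hcF (Finset.mem_of_mem_erase h))]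
      ring
    rw [hsum, ← Finset.mul_sum]
    field_simp

lemma transfer {α : Type*} [DecidableEq α] (F : Finset α) (a b : α → Polynomial ℂ)
    (hb : ∀ J ∈ F, (b J).eval 0 ≠ 0)
    (h : ∑ J ∈ F, (algebraMap (Polynomial ℂ) (RatFunc ℂ) (a J))
        / (algebraMap (Polynomial ℂ) (RatFunc ℂ) (b J)) = 0) :
    ∑ J ∈ F, (a J).eval 0 / (b J).eval 0 = 0 := by
  set φ := algebraMap (Polynomial ℂ) (RatFunc ℂ)
  have hb0 : ∀ J ∈ F, b J ≠ 0 := fun J hJ h0 => hb J hJ (by rw [h0]; simp)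
  have hbR : ∀ J ∈ F, φ (b J) ≠ 0 := fun J hJ => RatFunc.algebraMap_ne_zero (hb0 J hJ)
  rw [sum_div_eq F _ _ hbR] at h
  have hPR : φ (∏ J ∈ F, b J) ≠ 0 :=
    RatFunc.algebraMap_ne_zero (prod_ne_zero_iff.2 hb0)
  rw [map_prod] at hPR
  have hnum : ∑ J ∈ F, φ (a J) * ∏ J' ∈ F.erase J, φ (b J') = 0 :=
    (div_eq_zero_iff.1 h).resolve_right hPR
  have hpoly : ∑ J ∈ F, a J * ∏ J' ∈ F.erase J, b J' = 0 := by
    apply RatFunc.algebraMap_injective ℂ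
    rw [map_sum, map_zero]
    simpa [map_prod] using hnum
  have heval := congrArg (Polynomial.eval 0) hpoly
  simp only [eval_finset_sum, eval_mul, eval_prod, eval_zero] at heval
  rw [sum_div_eq F _ _ hb, heval, zero_div]

end Transfer



/-- key identity 2 (Lemma B.4), stated as a sum over the unordered
partitions `J ⊔ K` of the complement of `I`; the order-dependent factor
`∏_{q=1}^{n_D} ω^{q-1}` equals `ω^(n_D (n_D - 1)/2)` and the remaining factors are
symmetric in the `j`'s and in the `k`'s. -/
theorem stmt_2 (ω : ℂ) (hω1 : ω ≠ 1) (hω0 : ω ≠ 0) (t : ℂ) (ht : t ≠ 0) (τ : ℤ)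
    (n : ℕ) (hn : 1 ≤ n) (z : Fin n → ℂ)
    (hz0 : ∀ i, z i ≠ 0) (hzinj : Function.Injective z)
    (hden : ∀ (i : Fin n) (m : ℤ), t * z i * ω ^ m ≠ 1)
    (I : Finset (Fin n)) (hI : I.card < n) :
    ∑ J ∈ (univ \ I).powerset,
      ((-1 : ℂ) ^ ((univ \ I) \ J).card
        * ω ^ (((univ \ I) \ J).card * (((univ \ I) \ J).card - 1) / 2)
        * (∏ j ∈ J, 1 / (t * z j * ω ^ (τ + (((univ \ I) \ J).card : ℤ) + 1) - 1))
        * (∏ k ∈ (univ \ I) \ J, 1 / (t * z k * ω ^ (τ + (((univ \ I) \ J).card : ℤ)) - 1))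
        * ∏ j ∈ J, ∏ k ∈ (univ \ I) \ J, (z k - z j * ω) / (z k - z j)) = 0 := by
  classical
  set s : Finset (Fin n) := univ \ I with hsdef
  have hscard : s.card = n - I.card := by
    rw [hsdef, card_sdiff_of_subset (subset_univ I), card_univ, Fintype.card_fin]
  have hsne : s.Nonempty := card_pos.1 (by omega)
  set φ : Polynomial ℂ →+* RatFunc ℂ := (algebraMap (Polynomial ℂ) (RatFunc ℂ)) with hφdef
  set ψ : ℂ →+* RatFunc ℂ := φ.comp (C : ℂ →+* Polynomial ℂ) with hψdef
  have hψ : ∀ x : ℂ, φ (C x) = ψ x := fun _ => rfl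
  set p : Fin n → Polynomial ℂ := fun i => C (z i) + C (z i ^ 2) * X with hpdef
  set ζ : Fin n → RatFunc ℂ := fun i => φ (p i) with hζdef
  set ωR : RatFunc ℂ := ψ ω with hωRdef
  set uR : RatFunc ℂ := ψ t * ωR ^ τ with huRdef
  have hp0 : ∀ i, (p i).eval 0 = z i := fun i => by simp [hpdef]
  have hp1 : ∀ i, (p i).coeff 1 = z i ^ 2 := fun i => by
    rw [hpdef]
    simp only [coeff_add, coeff_C, coeff_C_mul, coeff_X_one]
    norm_num
  have hinjφ : Function.Injective φ := RatFunc.algebraMap_injective ℂ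
  have hφne : ∀ {q : Polynomial ℂ}, q ≠ 0 → φ q ≠ 0 := fun hq => by
    exact RatFunc.algebraMap_ne_zero hq
  have hωR0 : ωR ≠ 0 := hφne (by simp [hω0])
  have huR0 : uR ≠ 0 := mul_ne_zero (hφne (by simp [ht])) (zpow_ne_zero _ hωR0)
  have hpow : ∀ m : ℕ, uR * ωR ^ m = ψ (t * ω ^ (τ + (m : ℤ))) := by
    intro m
    rw [map_mul, map_zpow₀ ψ ω (τ + (m : ℤ)), zpow_add₀ hωR0, zpow_natCast, huRdef]
    ring
  have hfactor : ∀ (m : ℕ) (i : Fin n),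
      uR * ζ i * ωR ^ m - 1 = φ (C (t * ω ^ (τ + (m : ℤ))) * p i - 1) := by
    intro m i
    rw [map_sub, map_one, map_mul, hψ, ← hpow m, mul_right_comm]
  have hdenR : ∀ i ∈ s, ∀ m : ℕ, m ≤ s.card + 1 → uR * ζ i * ωR ^ m ≠ 1 := by
    intro i _ m _ h
    have h' : uR * ζ i * ωR ^ m - 1 = 0 := sub_eq_zero.2 h
    rw [hfactor m i, ← map_zero φ] at h'
    have hq := hinjφ h'
    have he := congrArg (Polynomial.eval 0) hq
    simp only [eval_mul, eval_sub, eval_one, eval_C, eval_zero, hp0] at he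
    exact hden i (τ + m) (by linear_combination he)
  have hζinj : Set.InjOn ζ s := by
    intro i _ j _ h
    have := congrArg (Polynomial.eval 0) (hinjφ h)
    simp only [hp0] at this
    exact hzinj this
  have hζcross : ∀ i ∈ s, ∀ j ∈ s, i ≠ j → ζ i ≠ ωR * ζ j := by
    intro i _ j _ _ h
    rw [hωRdef, ← hψ, ← map_mul] at h
    have hq := hinjφ h
    have h0 := congrArg (Polynomial.eval 0) hq
    simp only [eval_mul, eval_C, hp0] at h0
    have h1 := congrArg (fun q => Polynomial.coeff q 1) hq
    simp only [coeff_C_mul, hp1] at h1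
    have hc : ω * z j ^ 2 * ω = ω * z j ^ 2 * 1 := by
      rw [mul_one]; linear_combination h1 - (z i + ω * z j) * h0
    exact hω1 (mul_left_cancel₀ (mul_ne_zero hω0 (pow_ne_zero 2 (hz0 j))) hc)
  set a : Finset (Fin n) → Polynomial ℂ := fun J =>
    (-1 : Polynomial ℂ) ^ (s \ J).card * C (ω ^ ((s \ J).card * ((s \ J).card - 1) / 2))
      * ∏ j ∈ J, ∏ k ∈ s \ J, (p k - p j * C ω) with hadef
  set b : Finset (Fin n) → Polynomial ℂ := fun J =>
    (∏ j ∈ J, (C (t * ω ^ (τ + ((s \ J).card : ℤ) + 1)) * p j - 1))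
      * (∏ k ∈ s \ J, (C (t * ω ^ (τ + ((s \ J).card : ℤ))) * p k - 1))
      * ∏ j ∈ J, ∏ k ∈ s \ J, (p k - p j) with hbdef
  have hbeval : ∀ J ∈ s.powerset, (b J).eval 0 ≠ 0 := by
    intro J hJp
    have hJ : J ⊆ s := mem_powerset.1 hJp
    rw [hbdef]
    simp only [eval_mul, eval_prod, eval_sub, eval_one, eval_C, hp0]
    refine mul_ne_zero (mul_ne_zero ?_ ?_) ?_
    · exact prod_ne_zero_iff.2 fun j _ => sub_ne_zero.2 fun h =>
        hden j (τ + ((s \ J).card : ℤ) + 1) (by linear_combination h)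
    · exact prod_ne_zero_iff.2 fun k _ => sub_ne_zero.2 fun h =>
        hden k (τ + ((s \ J).card : ℤ)) (by linear_combination h)
    · exact prod_ne_zero_iff.2 fun j hj => prod_ne_zero_iff.2 fun k hk =>
        sub_ne_zero.2 fun h => (mem_sdiff.1 hk).2 (by rwa [hzinj h])
  have hA : ∀ J ∈ s.powerset,
      ((-1 : ℂ) ^ (s \ J).card
        * ω ^ ((s \ J).card * ((s \ J).card - 1) / 2)
        * (∏ j ∈ J, 1 / (t * z j * ω ^ (τ + ((s \ J).card : ℤ) + 1) - 1))
        * (∏ k ∈ s \ J, 1 / (t * z k * ω ^ (τ + ((s \ J).card : ℤ)) - 1))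
        * ∏ j ∈ J, ∏ k ∈ s \ J, (z k - z j * ω) / (z k - z j))
      = (a J).eval 0 / (b J).eval 0 := by
    intro J hJp
    have h1 : (∏ j ∈ J, 1 / (t * z j * ω ^ (τ + ((s \ J).card : ℤ) + 1) - 1))
        = ∏ j ∈ J, 1 / (t * ω ^ (τ + ((s \ J).card : ℤ) + 1) * z j - 1) :=
      prod_congr rfl fun j _ => by rw [mul_right_comm]
    have h2 : (∏ k ∈ s \ J, 1 / (t * z k * ω ^ (τ + ((s \ J).card : ℤ)) - 1))
        = ∏ k ∈ s \ J, 1 / (t * ω ^ (τ + ((s \ J).card : ℤ)) * z k - 1) :=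
      prod_congr rfl fun k _ => by rw [mul_right_comm]
    rw [h1, h2, combine_term]
    congr 1
    · rw [hadef]
      simp only [eval_mul, eval_pow, eval_neg, eval_one, eval_C, eval_prod, eval_sub, hp0]
    · rw [hbdef]
      simp only [eval_mul, eval_prod, eval_sub, eval_one, eval_C, hp0]
  have hsumR : ∑ J ∈ s.powerset, φ (a J) / φ (b J) = 0 := by
    have habs := abstract_sum s ζ ωR uR hsne hωR0 huR0 hζinj hζcross hdenR
    rw [← habs]
    refine Finset.sum_congr rfl fun J hJp => Eq.symm ?_
    have hf1 : (∏ j ∈ J, 1 / (uR * ζ j * ωR ^ ((s \ J).card + 1) - 1))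
        = ∏ j ∈ J, 1 / φ (C (t * ω ^ (τ + ((s \ J).card : ℤ) + 1)) * p j - 1) :=
      prod_congr rfl fun j _ => by
        rw [hfactor ((s \ J).card + 1) j,
          show (τ + (((s \ J).card + 1 : ℕ) : ℤ)) = τ + ((s \ J).card : ℤ) + 1 by push_cast; ring]
    have hf2 : (∏ k ∈ s \ J, 1 / (uR * ζ k * ωR ^ ((s \ J).card) - 1))
        = ∏ k ∈ s \ J, 1 / φ (C (t * ω ^ (τ + ((s \ J).card : ℤ))) * p k - 1) :=
      prod_congr rfl fun k _ => by rw [hfactor ((s \ J).card) k]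
    rw [hf1, hf2, combine_term]
    congr 1
    · rw [hadef]
      simp only [map_mul, map_prod, map_pow, map_neg, map_one, map_sub, hψ, hζdef, hωRdef]
    · rw [hbdef]
      simp only [map_mul, map_prod]
      congr 1
      refine prod_congr rfl fun j _ => prod_congr rfl fun k _ => ?_
      rw [map_sub, hζdef]
  rw [Finset.sum_congr rfl hA]
  exact transfer s.powerset a b hbeval hsumR
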